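/- arXiv:2012.13804 — 4 statements merged into one kernel-verified Lean document; each statement's English description precedes it below -/
import Mathlib

section
/- Let n ∈ ℕ, q' ∈ ℝⁿ and h₂ > 0. Define F : ℝⁿ \ {q'} → ℝ by F(q) = (1/(3‖q − q'‖³)) · exp(−‖q − q'‖²/h₂²). Then F is differentiable at every q ≠ q', and its gradient is ∇F(q) = −β(q) · (q − q'), where β(q) = [exp(−‖q − q'‖²/h₂²) / ‖q − q'‖] · (1/‖q − q'‖⁴ + 2/(3 h₂² ‖q − q'‖²)). -/
/-- **Gradient of a single MLOP repulsion term.**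
For `F q = (1/(3‖q − q'‖³)) · exp(−‖q − q'‖²/h₂²)`, the function `F` is differentiable at every
`q ≠ q'` and its gradient there is `∇F(q) = −β(q) • (q − q')` with
`β(q) = [exp(−‖q − q'‖²/h₂²)/‖q − q'‖] · (1/‖q − q'‖⁴ + 2/(3 h₂² ‖q − q'‖²))`. -/
theorem mlop_repulsion_gradient (n : ℕ) (q' : EuclideanSpace ℝ (Fin n)) (h₂ : ℝ)
    (hh₂ : 0 < h₂)
    (F : EuclideanSpace ℝ (Fin n) → ℝ)
    (hF : ∀ q, F q = 1 / (3 * ‖q - q'‖ ^ 3) * Real.exp (-‖q - q'‖ ^ 2 / h₂ ^ 2))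
    (β : EuclideanSpace ℝ (Fin n) → ℝ)
    (hβ : ∀ q, β q = Real.exp (-‖q - q'‖ ^ 2 / h₂ ^ 2) / ‖q - q'‖ *
      (1 / ‖q - q'‖ ^ 4 + 2 / (3 * h₂ ^ 2 * ‖q - q'‖ ^ 2))) :
    ∀ q, q ≠ q' → DifferentiableAt ℝ F q ∧ HasGradientAt F ((-β q) • (q - q')) q := by
  intro q hq
  set r : ℝ := ‖q - q'‖ with hr
  have hr0 : 0 < r := by
    rw [hr]; rw [norm_pos_iff]; exact sub_ne_zero.mpr hq
  set t : ℝ := r ^ 2 with ht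
  have ht0 : 0 < t := by positivity
  have hsq : Real.sqrt t = r := by rw [ht, Real.sqrt_sq hr0.le]
  -- the scalar outer function
  set G : ℝ → ℝ := fun s => 1 / (3 * Real.sqrt s ^ 3) * Real.exp (-s / h₂ ^ 2) with hG
  -- derivative of G at t
  have h1 : HasDerivAt (fun s => Real.sqrt s) (1 / (2 * Real.sqrt t)) t :=
    Real.hasDerivAt_sqrt ht0.ne'
  have h2 : HasDerivAt (fun s => 3 * Real.sqrt s ^ 3)
      (3 * ((3 : ℕ) * Real.sqrt t ^ 2 * (1 / (2 * Real.sqrt t)))) t :=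
    (h1.pow 3).const_mul 3
  have hne : 3 * Real.sqrt t ^ 3 ≠ 0 := by rw [hsq]; positivity
  have h3 : HasDerivAt (fun s => (3 * Real.sqrt s ^ 3)⁻¹)
      (-(3 * ((3 : ℕ) * Real.sqrt t ^ 2 * (1 / (2 * Real.sqrt t)))) / (3 * Real.sqrt t ^ 3) ^ 2)
      t := h2.inv hne
  have h4 : HasDerivAt (fun s => Real.exp (-s / h₂ ^ 2))
      (Real.exp (-t / h₂ ^ 2) * (-1 / h₂ ^ 2)) t := by
    have := ((hasDerivAt_id t).neg.div_const (h₂ ^ 2)).exp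
    simpa using this
  have hGder : HasDerivAt G
      (-(3 * ((3 : ℕ) * Real.sqrt t ^ 2 * (1 / (2 * Real.sqrt t)))) / (3 * Real.sqrt t ^ 3) ^ 2
        * Real.exp (-t / h₂ ^ 2)
        + (3 * Real.sqrt t ^ 3)⁻¹ * (Real.exp (-t / h₂ ^ 2) * (-1 / h₂ ^ 2))) t := by
    have := h3.mul h4
    simpa [hG, one_div, Pi.mul_def] using this
  set c : ℝ :=
      -(3 * ((3 : ℕ) * Real.sqrt t ^ 2 * (1 / (2 * Real.sqrt t)))) / (3 * Real.sqrt t ^ 3) ^ 2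
        * Real.exp (-t / h₂ ^ 2)
        + (3 * Real.sqrt t ^ 3)⁻¹ * (Real.exp (-t / h₂ ^ 2) * (-1 / h₂ ^ 2)) with hc
  -- inner function: squared norm
  have hs : HasFDerivAt (fun p : EuclideanSpace ℝ (Fin n) => ‖p - q'‖ ^ 2)
      (2 • (innerSL ℝ (q - q')).comp (ContinuousLinearMap.id ℝ _)) q := by
    have hid : HasFDerivAt (fun p : EuclideanSpace ℝ (Fin n) => p - q')
        (ContinuousLinearMap.id ℝ _) q := (hasFDerivAt_id q).sub_const q'
    exact hid.norm_sq
  have hcomp : HasFDerivAt F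
      (c • (2 • (innerSL ℝ (q - q')).comp (ContinuousLinearMap.id ℝ _))) q := by
    have := hGder.comp_hasFDerivAt q hs
    have hfun : F = G ∘ fun p : EuclideanSpace ℝ (Fin n) => ‖p - q'‖ ^ 2 := by
      funext p
      rw [hF p, hG]
      simp [Real.sqrt_sq (norm_nonneg _)]
    rw [hfun]; exact this
  -- identify the Fréchet derivative with toDual of the gradient
  have key : (InnerProductSpace.toDual ℝ (EuclideanSpace ℝ (Fin n))) ((-β q) • (q - q'))
      = c • (2 • (innerSL ℝ (q - q')).comp (ContinuousLinearMap.id ℝ _)) := by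
    ext y
    simp only [InnerProductSpace.toDual_apply_apply, ContinuousLinearMap.smul_apply,
      ContinuousLinearMap.coe_smul', Pi.smul_apply, ContinuousLinearMap.coe_comp',
      Function.comp_apply, ContinuousLinearMap.coe_id', id_eq, innerSL_apply_apply,
      inner_smul_left, RCLike.conj_to_real, smul_eq_mul]
    have hscal : -β q = 2 * c := by
      rw [hβ q, ← hr, hc, hsq, ht]
      have hr' : r ≠ 0 := hr0.ne'
      have hh' : h₂ ≠ 0 := hh₂.ne'
      field_simp
      ring
    rw [hscal]; ring
  have hgrad : HasGradientAt F ((-β q) • (q - q')) q := by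
    rw [hasGradientAt_iff_hasFDerivAt, key]
    exact hcomp
  exact ⟨hcomp.differentiableAt, hgrad⟩
end

section
/- Let n ∈ ℕ, ε > 0, h₁ > 0, h₂ > 0, λ ∈ ℝ, let p₁, …, p_J ∈ ℝⁿ and q₁, …, q_m ∈ ℝⁿ be given points, and define G : ℝⁿ → ℝ by G(q) = Σ_{j=1}^J √(‖q − p_j‖² + ε) · exp(−‖q − p_j‖²/h₁²) + λ · Σ_{i=1}^m (1/(3‖q − q_i‖³)) · exp(−‖q − q_i‖²/h₂²). Then at every q ∈ ℝⁿ with q ≠ q_i for all i = 1, …, m, the function G is differentiable and ∇G(q) = Σ_{j=1}^J α_j(q) (q − p_j) − λ Σ_{i=1}^m β_i(q) (q − q_i), where α_j(q) = [exp(−‖q − p_j‖²/h₁²)/√(‖q − p_j‖² + ε)] · (1 − (2/h₁²)(‖q − p_j‖² + ε)) and β_i(q) = [exp(−‖q − q_i‖²/h₂²)/‖q − q_i‖] · (1/‖q − q_i‖⁴ + 2/(3 h₂² ‖q − q_i‖²)). -/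
open InnerProductSpace

section Helpers
variable {F : Type*} [NormedAddCommGroup F] [InnerProductSpace ℝ F] [CompleteSpace F]

private lemma myGradAdd {f g : F → ℝ} {f' g' : F} {x : F} (hf : HasGradientAt f f' x)
    (hg : HasGradientAt g g' x) : HasGradientAt (fun y => f y + g y) (f' + g') x := by
  rw [hasGradientAt_iff_hasFDerivAt, map_add]
  exact hf.hasFDerivAt.add hg.hasFDerivAt

private lemma myGradSum {ι : Type*} (s : Finset ι) {f : ι → F → ℝ} {g : ι → F} {x : F}
    (h : ∀ i ∈ s, HasGradientAt (f i) (g i) x) :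
    HasGradientAt (fun y => ∑ i ∈ s, f i y) (∑ i ∈ s, g i) x := by
  rw [hasGradientAt_iff_hasFDerivAt, map_sum]
  exact HasFDerivAt.fun_sum fun i hi => (h i hi).hasFDerivAt

private lemma myGradConstMul {f : F → ℝ} {f' : F} {x : F} (c : ℝ) (hf : HasGradientAt f f' x) :
    HasGradientAt (fun y => c * f y) (c • f') x := by
  rw [hasGradientAt_iff_hasFDerivAt, map_smul]
  exact hf.hasFDerivAt.const_mul c

private lemma myGradComp (a q : F) {φ : ℝ → ℝ} {c : ℝ} (hφ : HasDerivAt φ c (‖q - a‖ ^ 2)) :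
    HasGradientAt (fun x => φ (‖x - a‖ ^ 2)) ((2 * c) • (q - a)) q := by
  have h1 : HasFDerivAt (fun x : F => ‖x - a‖ ^ 2)
      ((2 : ℕ) • (innerSL ℝ (q - a)).comp (ContinuousLinearMap.id ℝ F)) q :=
    ((hasFDerivAt_id q).sub_const a).norm_sq
  have h2 : HasFDerivAt (fun x => φ (‖x - a‖ ^ 2)) _ q := hφ.comp_hasFDerivAt q h1
  rw [hasGradientAt_iff_hasFDerivAt]
  refine h2.congr_fderiv ?_
  ext v
  simp [toDual_apply_apply, real_inner_smul_left]
  ring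

private lemma attract_scalar (s ε h₁ ex : ℝ) (hpos : 0 < s + ε) (hh : h₁ ≠ 0) :
    ex / Real.sqrt (s + ε) * (1 - 2 / h₁ ^ 2 * (s + ε)) =
    2 * (1 / (2 * Real.sqrt (s + ε)) * ex + Real.sqrt (s + ε) * (ex * (-1 / h₁ ^ 2))) := by
  have hself := Real.mul_self_sqrt hpos.le
  have htne : Real.sqrt (s + ε) ≠ 0 := ne_of_gt (Real.sqrt_pos.2 hpos)
  field_simp
  linear_combination (2 * ex) * hself

private lemma repulse_scalar (r h₂ ex : ℝ) (hr : 0 < r) (hh : h₂ ≠ 0) :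
    -(ex / r * (1 / r ^ 4 + 2 / (3 * h₂ ^ 2 * r ^ 2))) =
    2 * ((0 * (3 * r ^ 3) - 1 * (3 * ((3 : ℕ) * r ^ 2 * (1 / (2 * r))))) / (3 * r ^ 3) ^ 2 * ex +
      1 / (3 * r ^ 3) * (ex * (-1 / h₂ ^ 2))) := by
  have hr' : r ≠ 0 := hr.ne'
  field_simp
  ring

end Helpers


/-- **Gradient of the MLOP cost for a single moving point (equation (3) of the paper).**
For `G q = Σⱼ √(‖q − pⱼ‖² + ε)·exp(−‖q − pⱼ‖²/h₁²) + λ·Σᵢ (1/(3‖q − qᵢ‖³))·exp(−‖q − qᵢ‖²/h₂²)`,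
at every `q` distinct from all `qᵢ`, `G` is differentiable and
`∇G(q) = Σⱼ αⱼ(q)(q − pⱼ) − λ Σᵢ βᵢ(q)(q − qᵢ)`. -/
theorem mlop_cost_gradient (n J m : ℕ) (ε h₁ h₂ lam : ℝ)
    (hε : 0 < ε) (hh₁ : 0 < h₁) (hh₂ : 0 < h₂)
    (p : Fin J → EuclideanSpace ℝ (Fin n)) (qs : Fin m → EuclideanSpace ℝ (Fin n))
    (G : EuclideanSpace ℝ (Fin n) → ℝ)
    (hG : ∀ q, G q =
      (∑ j, Real.sqrt (‖q - p j‖ ^ 2 + ε) * Real.exp (-‖q - p j‖ ^ 2 / h₁ ^ 2)) +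
      lam * ∑ i, 1 / (3 * ‖q - qs i‖ ^ 3) * Real.exp (-‖q - qs i‖ ^ 2 / h₂ ^ 2))
    (α : EuclideanSpace ℝ (Fin n) → Fin J → ℝ)
    (hα : ∀ q j, α q j = Real.exp (-‖q - p j‖ ^ 2 / h₁ ^ 2) / Real.sqrt (‖q - p j‖ ^ 2 + ε) *
      (1 - 2 / h₁ ^ 2 * (‖q - p j‖ ^ 2 + ε)))
    (β : EuclideanSpace ℝ (Fin n) → Fin m → ℝ)
    (hβ : ∀ q i, β q i = Real.exp (-‖q - qs i‖ ^ 2 / h₂ ^ 2) / ‖q - qs i‖ *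
      (1 / ‖q - qs i‖ ^ 4 + 2 / (3 * h₂ ^ 2 * ‖q - qs i‖ ^ 2))) :
    ∀ q, (∀ i, q ≠ qs i) → DifferentiableAt ℝ G q ∧
      HasGradientAt G ((∑ j, α q j • (q - p j)) - lam • ∑ i, β q i • (q - qs i)) q := by
  intro q hq
  have hh₁' : (h₁ : ℝ) ≠ 0 := ne_of_gt hh₁
  have hh₂' : (h₂ : ℝ) ≠ 0 := ne_of_gt hh₂
  -- attraction terms
  have hA : ∀ j, HasGradientAt
      (fun x : EuclideanSpace ℝ (Fin n) =>
        Real.sqrt (‖x - p j‖ ^ 2 + ε) * Real.exp (-‖x - p j‖ ^ 2 / h₁ ^ 2))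
      (α q j • (q - p j)) q := by
    intro j
    have hpos : 0 < ‖q - p j‖ ^ 2 + ε := by positivity
    have hsqrt : HasDerivAt (fun s : ℝ => Real.sqrt (s + ε))
        (1 / (2 * Real.sqrt (‖q - p j‖ ^ 2 + ε))) (‖q - p j‖ ^ 2) := by
      simpa using ((hasDerivAt_id (‖q - p j‖ ^ 2)).add_const ε).sqrt (ne_of_gt hpos)
    have hlin : HasDerivAt (fun s : ℝ => -s / h₁ ^ 2) (-1 / h₁ ^ 2) (‖q - p j‖ ^ 2) := by
      simpa using ((hasDerivAt_id (‖q - p j‖ ^ 2)).neg.div_const (h₁ ^ 2))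
    have hexp := hlin.exp
    have hφ := hsqrt.mul hexp
    have h := myGradComp (p j) q hφ
    convert h using 2
    · rfl
    rw [hα]
    exact attract_scalar _ _ _ _ hpos hh₁'
  -- repulsion terms
  have hR : ∀ i, HasGradientAt
      (fun x : EuclideanSpace ℝ (Fin n) =>
        1 / (3 * ‖x - qs i‖ ^ 3) * Real.exp (-‖x - qs i‖ ^ 2 / h₂ ^ 2))
      ((-(β q i)) • (q - qs i)) q := by
    intro i
    have hr : 0 < ‖q - qs i‖ := by
      rw [norm_pos_iff, sub_ne_zero]; exact hq i
    have hsr : Real.sqrt (‖q - qs i‖ ^ 2) = ‖q - qs i‖ := Real.sqrt_sq (norm_nonneg _)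
    have hspos : (0 : ℝ) < ‖q - qs i‖ ^ 2 := by positivity
    have hsqrt : HasDerivAt Real.sqrt (1 / (2 * Real.sqrt (‖q - qs i‖ ^ 2))) (‖q - qs i‖ ^ 2) := by
      simpa using (hasDerivAt_id (‖q - qs i‖ ^ 2)).sqrt (ne_of_gt hspos)
    have hden : HasDerivAt (fun s : ℝ => 3 * Real.sqrt s ^ 3)
        (3 * ((3 : ℕ) * Real.sqrt (‖q - qs i‖ ^ 2) ^ 2 *
          (1 / (2 * Real.sqrt (‖q - qs i‖ ^ 2))))) (‖q - qs i‖ ^ 2) :=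
      (hsqrt.pow 3).const_mul 3
    have hdenne : 3 * Real.sqrt (‖q - qs i‖ ^ 2) ^ 3 ≠ 0 := by
      rw [hsr]; positivity
    have hinv := (hasDerivAt_const (‖q - qs i‖ ^ 2) (1 : ℝ)).div hden hdenne
    have hlin : HasDerivAt (fun s : ℝ => -s / h₂ ^ 2) (-1 / h₂ ^ 2) (‖q - qs i‖ ^ 2) := by
      simpa using ((hasDerivAt_id (‖q - qs i‖ ^ 2)).neg.div_const (h₂ ^ 2))
    have hexp := hlin.exp
    have hψ := hinv.mul hexp
    rw [hsr] at hψ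
    have heq : (fun x : EuclideanSpace ℝ (Fin n) =>
        1 / (3 * ‖x - qs i‖ ^ 3) * Real.exp (-‖x - qs i‖ ^ 2 / h₂ ^ 2)) =
        (fun x => (fun s : ℝ => 1 / (3 * Real.sqrt s ^ 3) * Real.exp (-s / h₂ ^ 2))
          (‖x - qs i‖ ^ 2)) := by
      funext x
      simp only [Real.sqrt_sq (norm_nonneg (x - qs i))]
    rw [heq]
    have h := myGradComp (qs i) q hψ
    convert h using 2
    · rfl
    rw [hβ]
    simp only [Pi.div_apply, hsr]
    exact repulse_scalar _ _ _ hr hh₂'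
  -- assemble
  have hS1 : HasGradientAt
      (fun x : EuclideanSpace ℝ (Fin n) =>
        ∑ j, Real.sqrt (‖x - p j‖ ^ 2 + ε) * Real.exp (-‖x - p j‖ ^ 2 / h₁ ^ 2))
      (∑ j, α q j • (q - p j)) q :=
    myGradSum Finset.univ (fun j _ => hA j)
  have hS2 : HasGradientAt
      (fun x : EuclideanSpace ℝ (Fin n) =>
        lam * ∑ i, 1 / (3 * ‖x - qs i‖ ^ 3) * Real.exp (-‖x - qs i‖ ^ 2 / h₂ ^ 2))
      (lam • ∑ i, (-(β q i)) • (q - qs i)) q :=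
    myGradConstMul lam (myGradSum Finset.univ (fun i _ => hR i))
  have hsum := myGradAdd hS1 hS2
  have hGrad : HasGradientAt G
      ((∑ j, α q j • (q - p j)) - lam • ∑ i, β q i • (q - qs i)) q := by
    have hval : (∑ j, α q j • (q - p j)) + lam • ∑ i, (-(β q i)) • (q - qs i) =
        (∑ j, α q j • (q - p j)) - lam • ∑ i, β q i • (q - qs i) := by
      rw [show (∑ i, (-(β q i)) • (q - qs i)) = -∑ i, β q i • (q - qs i) by
            rw [← Finset.sum_neg_distrib]
            exact Finset.sum_congr rfl fun i _ => neg_smul _ _,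
          smul_neg, ← sub_eq_add_neg]
    rw [← hval]
    exact hsum.congr_of_eventuallyEq (Filter.Eventually.of_forall hG)
  exact ⟨hGrad.differentiableAt, hGrad⟩
end

section
/- Let E be a real inner product space, L > 0, and let f : E → ℝ be differentiable, L-smooth (‖∇f(x₁) − ∇f(x₂)‖ ≤ L‖x₁ − x₂‖ for all x₁, x₂), and bounded below by m ∈ ℝ (f(x) ≥ m for all x). Define the gradient descent iterates x₀ ∈ E, x_{k+1} = x_k − (1/L)∇f(x_k). Then for every K ∈ ℕ, Σ_{k=0}^{K−1} ‖∇f(x_k)‖² ≤ 2L(f(x₀) − m). -/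
lemma gd_descent_lemma {E : Type*} [NormedAddCommGroup E] [InnerProductSpace ℝ E]
    (f : E → ℝ) (g : E → E) (L : ℝ) (hL : 0 < L)
    (hdiff : ∀ x, HasFDerivAt f (innerSL ℝ (g x)) x)
    (hlip : ∀ x₁ x₂, ‖g x₁ - g x₂‖ ≤ L * ‖x₁ - x₂‖)
    (x v : E) :
    f (x + v) ≤ f x + inner ℝ (g x) v + L / 2 * ‖v‖ ^ 2 := by
  set φ : ℝ → ℝ := fun t => f (x + t • v) - t * inner ℝ (g x) v - L / 2 * ‖v‖ ^ 2 * t ^ 2 with hφdef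
  have hψ : ∀ t : ℝ, HasDerivAt (fun s : ℝ => f (x + s • v))
      ((inner ℝ (g (x + t • v)) v : ℝ)) t := by
    intro t
    have h1 : HasDerivAt (fun s : ℝ => x + s • v) v t := by
      simpa using ((hasDerivAt_id t).smul_const v).const_add x
    exact (hdiff (x + t • v)).comp_hasDerivAt t h1
  have hφ : ∀ t : ℝ, HasDerivAt φ
      ((inner ℝ (g (x + t • v)) v : ℝ) - inner ℝ (g x) v - L / 2 * ‖v‖ ^ 2 * (2 * t ^ 1)) t := by
    intro t
    exact ((hψ t).sub (hasDerivAt_mul_const _)).sub ((hasDerivAt_pow 2 t).const_mul _)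
  have key : φ 1 ≤ φ 0 := by
    have hmono : AntitoneOn φ (Set.Icc (0:ℝ) 1) := by
      apply antitoneOn_of_deriv_nonpos (convex_Icc 0 1)
      · exact Continuous.continuousOn (by
          have : ∀ t : ℝ, ContinuousAt φ t := fun t => (hφ t).continuousAt
          exact continuous_iff_continuousAt.mpr this)
      · intro t ht
        rw [interior_Icc] at ht
        exact ((hφ t).differentiableAt).differentiableWithinAt
      · intro t ht
        rw [interior_Icc] at ht
        rw [(hφ t).deriv]
        have hinner : (inner ℝ (g (x + t • v)) v : ℝ) - inner ℝ (g x) v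
            = inner ℝ (g (x + t • v) - g x) v := by rw [inner_sub_left]
        rw [hinner]
        have h1 : (inner ℝ (g (x + t • v) - g x) v : ℝ) ≤ ‖g (x + t • v) - g x‖ * ‖v‖ :=
          real_inner_le_norm _ _
        have h2 : ‖g (x + t • v) - g x‖ ≤ L * (t * ‖v‖) := by
          have := hlip (x + t • v) x
          simpa [norm_smul, abs_of_pos ht.1, mul_assoc] using this
        have h3 : (inner ℝ (g (x + t • v) - g x) v : ℝ) ≤ L * (t * ‖v‖) * ‖v‖ :=
          h1.trans (by
            have := mul_le_mul_of_nonneg_right h2 (norm_nonneg v)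
            linarith)
        nlinarith [ht.1, norm_nonneg v]
    exact hmono (by norm_num) (by norm_num) (by norm_num)
  have h0 : φ 0 = f x := by simp [hφdef]
  have h1 : φ 1 = f (x + v) - inner ℝ (g x) v - L / 2 * ‖v‖ ^ 2 := by simp [hφdef]
  rw [h0, h1] at key
  linarith

/-- **Summability of squared gradient norms along gradient descent.**
If `f : E → ℝ` is differentiable with `L`-Lipschitz gradient field `g` (`L > 0`) and bounded
below by `m`, then the iterates `x_{k+1} = x_k − (1/L) g(x_k)` satisfy
`Σ_{k=0}^{K−1} ‖g(x_k)‖² ≤ 2L(f(x₀) − m)` for every `K`. -/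
theorem gradient_descent_sum_sq {E : Type*} [NormedAddCommGroup E] [InnerProductSpace ℝ E]
    (f : E → ℝ) (g : E → E) (L : ℝ) (hL : 0 < L)
    (hdiff : ∀ x, HasFDerivAt f (innerSL ℝ (g x)) x)
    (hlip : ∀ x₁ x₂, ‖g x₁ - g x₂‖ ≤ L * ‖x₁ - x₂‖)
    (m : ℝ) (hm : ∀ x, m ≤ f x)
    (x : ℕ → E) (hx : ∀ k, x (k + 1) = x k - L⁻¹ • g (x k)) :
    ∀ K : ℕ, ∑ k ∈ Finset.range K, ‖g (x k)‖ ^ 2 ≤ 2 * L * (f (x 0) - m) := by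
  have hstep : ∀ k, ‖g (x k)‖ ^ 2 ≤ 2 * L * (f (x k) - f (x (k + 1))) := by
    intro k
    have hdec := gd_descent_lemma f g L hL hdiff hlip (x k) (-(L⁻¹ • g (x k)))
    have hxk : x (k + 1) = x k + -(L⁻¹ • g (x k)) := by rw [hx k]; abel
    rw [← hxk] at hdec
    have hin : (inner ℝ (g (x k)) (-(L⁻¹ • g (x k))) : ℝ) = -(L⁻¹ * ‖g (x k)‖ ^ 2) := by
      rw [inner_neg_right, real_inner_smul_right, real_inner_self_eq_norm_sq]
    have hnrm : ‖-(L⁻¹ • g (x k))‖ ^ 2 = L⁻¹ ^ 2 * ‖g (x k)‖ ^ 2 := by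
      rw [norm_neg, norm_smul, mul_pow, Real.norm_eq_abs, sq_abs]
    rw [hin, hnrm] at hdec
    have hLi : L * L⁻¹ = 1 := mul_inv_cancel₀ hL.ne'
    have hLi2 : L / 2 * (L⁻¹ ^ 2 * ‖g (x k)‖ ^ 2) = L⁻¹ / 2 * ‖g (x k)‖ ^ 2 := by
      rw [sq L⁻¹]; field_simp
    rw [hLi2] at hdec
    have h3 : L⁻¹ / 2 * ‖g (x k)‖ ^ 2 ≤ f (x k) - f (x (k + 1)) := by linarith
    have h4 := mul_le_mul_of_nonneg_left h3 (by linarith : (0:ℝ) ≤ 2 * L)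
    calc ‖g (x k)‖ ^ 2 = 2 * L * (L⁻¹ / 2 * ‖g (x k)‖ ^ 2) := by
          field_simp
      _ ≤ 2 * L * (f (x k) - f (x (k + 1))) := h4
  intro K
  calc ∑ k ∈ Finset.range K, ‖g (x k)‖ ^ 2
      ≤ ∑ k ∈ Finset.range K, 2 * L * (f (x k) - f (x (k + 1))) :=
        Finset.sum_le_sum fun k _ => hstep k
    _ = 2 * L * ∑ k ∈ Finset.range K, (f (x k) - f (x (k + 1))) := by
        rw [Finset.mul_sum]
    _ = 2 * L * (f (x 0) - f (x K)) := by rw [Finset.sum_range_sub' (fun k => f (x k))]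
    _ ≤ 2 * L * (f (x 0) - m) := by
        have := hm (x K)
        nlinarith [hL]
end

section
/- Let x₁, …, x_K ∈ ℝⁿ be pairwise distinct points, let h > 0, and let y₁, …, y_K ∈ ℝ be arbitrary values. Then there exist unique coefficients λ₁, …, λ_K ∈ ℝ such that Σ_{j=1}^K λ_j exp(−‖x_i − x_j‖²/h²) = y_i for every i = 1, …, K. -/
open MeasureTheory Real
open scoped RealInnerProductSpace

variable {n : ℕ}

local notation "E" n => EuclideanSpace ℝ (Fin n)

-- norm identity
lemma key_norm (u v z : EuclideanSpace ℝ (Fin n)) :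
    ‖u - z‖ ^ 2 + ‖v - z‖ ^ 2
      = 2 * ‖z - (2:ℝ)⁻¹ • (u + v)‖ ^ 2 + ‖u - v‖ ^ 2 / 2 := by
  have h1 := norm_add_sq_real (u - z) (v - z)
  have h2 := norm_sub_sq_real (u - z) (v - z)
  have h3 : (u - z) + (v - z) = (-2 : ℝ) • (z - (2:ℝ)⁻¹ • (u + v)) := by
    module
  have h4 : (u - z) - (v - z) = u - v := by abel
  have h5 : ‖(-2 : ℝ) • (z - (2:ℝ)⁻¹ • (u + v))‖ ^ 2
      = 4 * ‖z - (2:ℝ)⁻¹ • (u + v)‖ ^ 2 := by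
    rw [norm_smul]; norm_num; ring
  rw [h3, h5] at h1
  rw [h4] at h2
  linarith

-- integrability of the real gaussian
lemma integ_gauss {b : ℝ} (hb : 0 < b) :
    Integrable (fun z : EuclideanSpace ℝ (Fin n) => rexp (-b * ‖z‖ ^ 2)) := by
  have H := (GaussianFourier.integrable_cexp_neg_mul_sq_norm_add
    (b := (b : ℂ)) (by simpa using hb) 0 (0 : EuclideanSpace ℝ (Fin n))).re
  refine H.congr (Filter.Eventually.of_forall fun z => ?_)
  simp [← Complex.ofReal_pow, ← Complex.ofReal_neg, ← Complex.ofReal_mul, Complex.exp_ofReal_re]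

lemma exponent_eq {a : ℝ} (u v z : EuclideanSpace ℝ (Fin n)) :
    -a * ‖u - z‖ ^ 2 + -a * ‖v - z‖ ^ 2
      = -(2 * a) * ‖z - (2:ℝ)⁻¹ • (u + v)‖ ^ 2 + -(a / 2) * ‖u - v‖ ^ 2 := by
  have := key_norm u v z
  linear_combination (-a) * this

lemma integ_prod_gauss {a : ℝ} (ha : 0 < a) (u v : EuclideanSpace ℝ (Fin n)) :
    Integrable (fun z : EuclideanSpace ℝ (Fin n) =>
      rexp (-a * ‖u - z‖ ^ 2) * rexp (-a * ‖v - z‖ ^ 2)) := by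
  have h2a : (0:ℝ) < 2 * a := by linarith
  have base := (integ_gauss (n := n) h2a).comp_sub_right ((2:ℝ)⁻¹ • (u + v))
  refine (base.mul_const (rexp (-(a / 2) * ‖u - v‖ ^ 2))).congr
    (Filter.Eventually.of_forall fun z => ?_)
  simp only
  rw [← Real.exp_add, ← Real.exp_add, exponent_eq]

lemma integral_prod_gauss {a : ℝ} (ha : 0 < a) (u v : EuclideanSpace ℝ (Fin n)) :
    ∫ z : EuclideanSpace ℝ (Fin n),
        rexp (-a * ‖u - z‖ ^ 2) * rexp (-a * ‖v - z‖ ^ 2)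
      = (∫ z : EuclideanSpace ℝ (Fin n), rexp (-(2 * a) * ‖z‖ ^ 2))
          * rexp (-(a / 2) * ‖u - v‖ ^ 2) := by
  have step : ∀ z : EuclideanSpace ℝ (Fin n),
      rexp (-a * ‖u - z‖ ^ 2) * rexp (-a * ‖v - z‖ ^ 2)
        = rexp (-(2 * a) * ‖z - (2:ℝ)⁻¹ • (u + v)‖ ^ 2)
            * rexp (-(a / 2) * ‖u - v‖ ^ 2) := by
    intro z
    rw [← Real.exp_add, ← Real.exp_add, exponent_eq]
  simp_rw [step]
  rw [integral_mul_const]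
  congr 1
  exact integral_sub_right_eq_self
    (fun z : EuclideanSpace ℝ (Fin n) => rexp (-(2 * a) * ‖z‖ ^ 2)) _

/-- If a finite combination of Gaussians centered at distinct points vanishes identically,
the coefficients vanish. -/
lemma gaussians_linIndep {K : ℕ} (x : Fin K → EuclideanSpace ℝ (Fin n))
    (hx : Function.Injective x) {a : ℝ} (ha : 0 < a) (c : Fin K → ℝ)
    (hc : ∀ z : EuclideanSpace ℝ (Fin n),
      ∑ i, c i * rexp (-a * ‖x i - z‖ ^ 2) = 0) : c = 0 := by
  set b : Fin K → EuclideanSpace ℝ (Fin n) := fun i => (2 * a) • x i with hb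
  set d : Fin K → ℝ := fun i => c i * rexp (-a * ‖x i‖ ^ 2) with hd
  -- the characters
  have hchar : ∀ z : EuclideanSpace ℝ (Fin n), ∑ i, d i * rexp ⟪b i, z⟫ = 0 := by
    intro z
    have := hc z
    have expand : ∀ i, c i * rexp (-a * ‖x i - z‖ ^ 2)
        = (d i * rexp ⟪b i, z⟫) * rexp (-a * ‖z‖ ^ 2) := by
      intro i
      have hnorm : ‖x i - z‖ ^ 2 = ‖x i‖ ^ 2 - 2 * ⟪x i, z⟫ + ‖z‖ ^ 2 :=
        norm_sub_sq_real _ _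
      have hib : ⟪b i, z⟫ = 2 * a * ⟪x i, z⟫ := real_inner_smul_left _ _ _
      simp only [hd]
      rw [show -a * ‖x i - z‖ ^ 2
          = (-a * ‖x i‖ ^ 2) + (⟪b i, z⟫ + -a * ‖z‖ ^ 2) by
        rw [hib, hnorm]; ring, Real.exp_add, Real.exp_add]
      ring
    rw [Finset.sum_congr rfl (fun i _ => expand i), ← Finset.sum_mul] at this
    exact (mul_eq_zero.mp this).resolve_right (Real.exp_ne_zero _)
  -- build monoid homs
  let φ : Fin K → (Multiplicative (EuclideanSpace ℝ (Fin n)) →* ℝ) := fun i =>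
    { toFun := fun z => rexp ⟪b i, Multiplicative.toAdd z⟫
      map_one' := by simp
      map_mul' := by
        intro z w
        simp [inner_add_right, Real.exp_add] }
  have hφinj : Function.Injective φ := by
    intro i j hij
    have hval : ∀ z : EuclideanSpace ℝ (Fin n), rexp ⟪b i, z⟫ = rexp ⟪b j, z⟫ := by
      intro z
      exact congrFun (congrArg DFunLike.coe hij) (Multiplicative.ofAdd z)
    have hinner : ∀ z : EuclideanSpace ℝ (Fin n), ⟪b i - b j, z⟫ = 0 := by
      intro z
      have := Real.exp_injective (hval z)
      rw [inner_sub_left]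
      linarith
    have hbij : b i = b j := by
      have := hinner (b i - b j)
      rwa [inner_self_eq_zero, sub_eq_zero] at this
    have hxij : x i = x j := by
      have h2a : (2 * a : ℝ) ≠ 0 := by positivity
      exact smul_right_injective _ h2a hbij
    exact hx hxij
  have li : LinearIndependent ℝ (fun i : Fin K => ⇑(φ i)) :=
    (linearIndependent_monoidHom (Multiplicative (EuclideanSpace ℝ (Fin n))) ℝ).comp φ hφinj
  have hsum : ∑ i, d i • ⇑(φ i) = (0 : Multiplicative (EuclideanSpace ℝ (Fin n)) → ℝ) := by
    funext z
    simpa [Finset.sum_apply, φ, MonoidHom.coe_mk, OneHom.coe_mk] using hchar (Multiplicative.toAdd z)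
  have hdz : ∀ i, d i = 0 := Fintype.linearIndependent_iff.mp li d hsum
  funext i
  have := hdz i
  simp only [hd, mul_eq_zero] at this
  exact this.resolve_right (Real.exp_ne_zero _)

/-- **Well-posedness of Gaussian RBF interpolation.**
For pairwise distinct centers `x₁, …, x_K ∈ ℝⁿ`, `h > 0` and arbitrary values `y₁, …, y_K`,
there exist unique coefficients `λ₁, …, λ_K` with
`Σⱼ λⱼ exp(−‖xᵢ − xⱼ‖²/h²) = yᵢ` for every `i`. -/
theorem gaussian_rbf_interpolation (n K : ℕ) (x : Fin K → EuclideanSpace ℝ (Fin n))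
    (hx : Function.Injective x) (h : ℝ) (hh : 0 < h) (y : Fin K → ℝ) :
    ∃! lam : Fin K → ℝ,
      ∀ i, ∑ j, lam j * Real.exp (-‖x i - x j‖ ^ 2 / h ^ 2) = y i := by
  set a : ℝ := 2 / h ^ 2 with ha_def
  have ha : 0 < a := by positivity
  have hexp : ∀ u v : EuclideanSpace ℝ (Fin n),
      rexp (-‖u - v‖ ^ 2 / h ^ 2) = rexp (-(a / 2) * ‖u - v‖ ^ 2) := by
    intro u v; congr 1; rw [ha_def]; field_simp
  set M : Matrix (Fin K) (Fin K) ℝ :=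
    Matrix.of fun i j => rexp (-‖x i - x j‖ ^ 2 / h ^ 2) with hM
  have hinj : Function.Injective M.mulVecLin := by
    rw [← LinearMap.ker_eq_bot, LinearMap.ker_eq_bot']
    intro c hc
    have hc' : ∀ i, ∑ j, M i j * c j = 0 := by
      intro i
      have := congrFun hc i
      simpa [Matrix.mulVecLin_apply, Matrix.mulVec, dotProduct] using this
    set F : EuclideanSpace ℝ (Fin n) → ℝ :=
      fun z => ∑ i, c i * rexp (-a * ‖x i - z‖ ^ 2) with hF
    set C : ℝ := ∫ z : EuclideanSpace ℝ (Fin n), rexp (-(2 * a) * ‖z‖ ^ 2) with hC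
    have hFsq : ∀ z, F z ^ 2 = ∑ i, ∑ j, (c i * c j) *
        (rexp (-a * ‖x i - z‖ ^ 2) * rexp (-a * ‖x j - z‖ ^ 2)) := by
      intro z
      rw [hF, sq, Finset.sum_mul_sum]
      exact Finset.sum_congr rfl fun i _ => Finset.sum_congr rfl fun j _ => by ring
    have hterm : Integrable (fun z : EuclideanSpace ℝ (Fin n) =>
        ∑ i : Fin K, ∑ j : Fin K, (c i * c j) *
          (rexp (-a * ‖x i - z‖ ^ 2) * rexp (-a * ‖x j - z‖ ^ 2))) :=
      integrable_finset_sum Finset.univ fun i _ =>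
        integrable_finset_sum Finset.univ fun j _ =>
          ((integ_prod_gauss ha (x i) (x j)).const_mul (c i * c j))
    have hIsq : Integrable (fun z : EuclideanSpace ℝ (Fin n) => F z ^ 2) :=
      hterm.congr (Filter.Eventually.of_forall fun z => (hFsq z).symm)
    have hint : ∫ z : EuclideanSpace ℝ (Fin n), F z ^ 2 = 0 := by
      have h1 : ∫ z : EuclideanSpace ℝ (Fin n), F z ^ 2
          = ∑ i, ∑ j, (c i * c j) * (C * rexp (-(a / 2) * ‖x i - x j‖ ^ 2)) := by
        simp_rw [hFsq]
        rw [integral_finset_sum _ fun i _ => integrable_finset_sum _ fun j _ =>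
          ((integ_prod_gauss ha (x i) (x j)).const_mul (c i * c j))]
        refine Finset.sum_congr rfl fun i _ => ?_
        rw [integral_finset_sum _ fun j _ =>
          ((integ_prod_gauss ha (x i) (x j)).const_mul (c i * c j))]
        refine Finset.sum_congr rfl fun j _ => ?_
        rw [integral_const_mul, integral_prod_gauss ha]
      rw [h1]
      have h2 : ∀ i j, (c i * c j) * (C * rexp (-(a / 2) * ‖x i - x j‖ ^ 2))
          = C * (c i * (M i j * c j)) := by
        intro i j
        rw [hM]
        simp only [Matrix.of_apply, hexp]
        ring
      simp_rw [h2, ← Finset.mul_sum, hc', mul_zero, Finset.sum_const_zero, mul_zero]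
    have hcont : Continuous F := by
      refine continuous_finset_sum _ fun i _ => continuous_const.mul ?_
      exact Real.continuous_exp.comp (continuous_const.mul
        (((continuous_const.sub continuous_id).norm).pow 2))
    have hFz : ∀ z, F z = 0 := by
      have hae := (integral_eq_zero_iff_of_nonneg
        (fun z => sq_nonneg (F z)) hIsq).mp hint
      have heq : (fun z : EuclideanSpace ℝ (Fin n) => F z ^ 2) = 0 :=
        ((hcont.pow 2).ae_eq_iff_eq volume continuous_const).mp hae
      intro z
      have := congrFun heq z
      exact pow_eq_zero_iff two_ne_zero |>.mp this
    exact gaussians_linIndep x hx ha c hFz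
  have key : ∀ lam' : Fin K → ℝ,
      (∀ i, ∑ j, lam' j * Real.exp (-‖x i - x j‖ ^ 2 / h ^ 2) = y i)
        ↔ M.mulVecLin lam' = y := by
    intro lam'
    have hswap : ∀ i, M.mulVecLin lam' i
        = ∑ j, lam' j * Real.exp (-‖x i - x j‖ ^ 2 / h ^ 2) := by
      intro i
      simp only [Matrix.mulVecLin_apply, Matrix.mulVec, dotProduct, hM,
        Matrix.of_apply]
      exact Finset.sum_congr rfl fun j _ => mul_comm _ _
    constructor
    · intro H; funext i; rw [hswap i, H i]
    · intro H i; rw [← hswap i, H]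
  obtain ⟨lam, hlam⟩ := LinearMap.injective_iff_surjective.mp hinj y
  refine ⟨lam, (key lam).mpr hlam, fun lam' hlam' => hinj ?_⟩
  rw [(key lam').mp hlam', hlam]
end
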